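/- Let p̄ > 0, let w : [0, 1] → ℝ be twice continuously differentiable with w(0) = w(1) = 0, let θ₁, δ : [0, 1] → ℝ be continuous, let y ∈ ℝ, and let K : [0, 1] → ℝ be continuous with |K(x)| ≤ |y| for all x ∈ [0, 1]. Then (1/p̄)·∫₀¹ w(x)·(p̄·w''(x) + θ₁(x)K(x) + δ(x)) dx ≤ −∫₀¹ w(x)² dx + (1/p̄²)·(∫₀¹ θ₁(x)² dx)·y² + (1/(p̄²(4π² − 5)))·∫₀¹ δ(x)² dx. -/

import Mathlib

open intervalIntegral
open Real MeasureTheory Filter Topology Set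

lemma wirtinger_aux (w : ℝ → ℝ) (hw : ContDiff ℝ 1 w) (hw0 : w 0 = 0) (hw1 : w 1 = 0) :
    Real.pi ^ 2 * ∫ x in (0:ℝ)..1, (w x)^2 ≤ ∫ x in (0:ℝ)..1, (deriv w x)^2 := by
  have hπ : (0:ℝ) < π := Real.pi_pos
  have hwd : Differentiable ℝ w := hw.differentiable (by norm_num)
  have hw' : Continuous (deriv w) := hw.continuous_deriv le_rfl
  set g : ℝ → ℝ := fun x => (deriv w x)^2 - π^2 * (w x)^2 with hgdef
  have hg : Continuous g := (hw'.pow 2).sub (continuous_const.mul ((hwd.continuous).pow 2))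
  have hgi : ∀ a b : ℝ, IntervalIntegrable g volume a b := fun a b => hg.intervalIntegrable a b
  set G : ℝ → ℝ := fun t => ∫ x in (0:ℝ)..t, g x with hGdef
  have hGc : Continuous G := intervalIntegral.continuous_primitive hgi 0
  set F : ℝ → ℝ := fun x => π * (w x)^2 * Real.cos (π*x) / Real.sin (π*x) with hFdef
  -- key estimate on [a,b] ⊂ (0,1)
  have key : ∀ a b : ℝ, 0 < a → a ≤ b → b < 1 → F b - F a ≤ G b - G a := by
    intro a b ha hab hb1
    set sq : ℝ → ℝ := fun x => (deriv w x - π * w x * Real.cos (π*x) / Real.sin (π*x))^2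
      with hsqdef
    set F' : ℝ → ℝ := fun x => g x - sq x with hF'def
    have hsin : ∀ x ∈ Set.Icc a b, Real.sin (π*x) ≠ 0 := by
      intro x hx
      have h1 : 0 < π * x := mul_pos hπ (lt_of_lt_of_le ha hx.1)
      have h2 : π * x < π := by
        have : x < 1 := lt_of_le_of_lt hx.2 hb1
        nlinarith
      exact ne_of_gt (Real.sin_pos_of_pos_of_lt_pi h1 h2)
    have hder : ∀ x ∈ Set.uIcc a b, HasDerivAt F (F' x) x := by
      intro x hx
      rw [Set.uIcc_of_le hab] at hx
      have hs := hsin x hx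
      have hwx : HasDerivAt w (deriv w x) x := (hwd x).hasDerivAt
      have hlin : HasDerivAt (fun y : ℝ => π * y) π x := by
        simpa using (hasDerivAt_id x).const_mul π
      have hcos : HasDerivAt (fun y => Real.cos (π*y)) (-Real.sin (π*x) * π) x := hlin.cos
      have hsinD : HasDerivAt (fun y => Real.sin (π*y)) (Real.cos (π*x) * π) x := hlin.sin
      have hnum : HasDerivAt (fun y => π * (w y)^2 * Real.cos (π*y))
          ((π * (2 * w x * deriv w x)) * Real.cos (π*x)
            + (π * (w x)^2) * (-Real.sin (π*x) * π)) x := by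
        have hsq : HasDerivAt (fun y => π * (w y)^2) (π * (2 * w x * deriv w x)) x := by
          simpa [mul_comm, mul_left_comm, mul_assoc] using (hwx.pow 2).const_mul π
        exact hsq.mul hcos
      have hdiv := hnum.div hsinD hs
      refine hdiv.congr_deriv ?_
      have pyth := Real.sin_sq_add_cos_sq (π*x)
      simp only [hF'def, hsqdef, hgdef]
      field_simp
      ring_nf
    have hsqc : ContinuousOn sq (Set.Icc a b) := by
      apply ContinuousOn.pow
      apply ContinuousOn.sub hw'.continuousOn
      exact ContinuousOn.div
        ((continuous_const.mul hwd.continuous).mul (Real.continuous_cos.comp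
          (continuous_const.mul continuous_id))).continuousOn
        (Real.continuous_sin.comp (continuous_const.mul continuous_id)).continuousOn hsin
    have hF'c : ContinuousOn F' (Set.Icc a b) := hg.continuousOn.sub hsqc
    have hF'i : IntervalIntegrable F' volume a b := by
      apply ContinuousOn.intervalIntegrable
      rwa [Set.uIcc_of_le hab]
    have hFsub : F b - F a = ∫ x in a..b, F' x :=
      (integral_eq_sub_of_hasDerivAt hder hF'i).symm
    have hmono : (∫ x in a..b, F' x) ≤ ∫ x in a..b, g x := by
      apply intervalIntegral.integral_mono_on hab hF'i (hgi a b)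
      intro x hx
      simp only [hF'def, hsqdef]
      exact sub_le_self _ (sq_nonneg _)
    have hGsub : G b - G a = ∫ x in a..b, g x :=
      integral_interval_sub_left (hgi 0 b) (hgi 0 a)
    rw [hFsub, hGsub]; exact hmono
  -- limits
  have hslope0 : Tendsto (fun x => w x / Real.sin (π*x)) (𝓝[≠] (0:ℝ)) (𝓝 (deriv w 0 / π)) := by
    have h1 : Tendsto (slope w 0) (𝓝[≠] (0:ℝ)) (𝓝 (deriv w 0)) :=
      hasDerivAt_iff_tendsto_slope.mp (hwd 0).hasDerivAt
    have h2 : Tendsto (slope (fun y => Real.sin (π*y)) 0) (𝓝[≠] (0:ℝ)) (𝓝 π) := by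
      have hlin : HasDerivAt (fun y : ℝ => π * y) π 0 := by
        simpa using (hasDerivAt_id (0:ℝ)).const_mul π
      have := hasDerivAt_iff_tendsto_slope.mp hlin.sin
      simpa using this
    have h3 := h1.div h2 (ne_of_gt hπ)
    refine Tendsto.congr' ?_ h3
    filter_upwards [self_mem_nhdsWithin] with x hx
    have hx0 : (x:ℝ) ≠ 0 := hx
    simp only [Pi.div_apply, slope_def_field, hw0, mul_zero, sub_zero, Real.sin_zero]
    exact div_div_div_cancel_right₀ hx0 _ _
  have hslope1 : Tendsto (fun x => w x / Real.sin (π*x)) (𝓝[≠] (1:ℝ))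
      (𝓝 (deriv w 1 / (Real.cos (π*1) * π))) := by
    have h1 : Tendsto (slope w 1) (𝓝[≠] (1:ℝ)) (𝓝 (deriv w 1)) :=
      hasDerivAt_iff_tendsto_slope.mp (hwd 1).hasDerivAt
    have hlin : HasDerivAt (fun y : ℝ => π * y) π 1 := by
      simpa using (hasDerivAt_id (1:ℝ)).const_mul π
    have h2 : Tendsto (slope (fun y => Real.sin (π*y)) 1) (𝓝[≠] (1:ℝ))
        (𝓝 (Real.cos (π*1) * π)) :=
      hasDerivAt_iff_tendsto_slope.mp hlin.sin
    have hcne : Real.cos (π*1) * π ≠ 0 := by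
      simp [Real.cos_pi]
    have h3 := h1.div h2 hcne
    refine Tendsto.congr' ?_ h3
    filter_upwards [self_mem_nhdsWithin] with x hx
    have hx1 : x - 1 ≠ 0 := sub_ne_zero.mpr hx
    simp only [Pi.div_apply, slope_def_field, hw1, mul_one, sub_zero, Real.sin_pi]
    exact div_div_div_cancel_right₀ hx1 _ _
  have hmulc : Continuous (fun x => π * w x * Real.cos (π*x)) :=
    (continuous_const.mul hwd.continuous).mul
      (Real.continuous_cos.comp (continuous_const.mul continuous_id))
  have hFeq : F = fun x => (w x / Real.sin (π*x)) * (π * w x * Real.cos (π*x)) := by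
    funext x; simp only [hFdef]; ring
  have hF0 : Tendsto F (𝓝[≠] (0:ℝ)) (𝓝 0) := by
    have hm : Tendsto (fun x => π * w x * Real.cos (π*x)) (𝓝[≠] (0:ℝ)) (𝓝 0) := by
      have := (hmulc.tendsto 0).mono_left (nhdsWithin_le_nhds (s := {(0:ℝ)}ᶜ))
      simpa [hw0] using this
    have := hslope0.mul hm
    rw [mul_zero] at this
    rw [hFeq]; exact this
  have hF1 : Tendsto F (𝓝[≠] (1:ℝ)) (𝓝 0) := by
    have hm : Tendsto (fun x => π * w x * Real.cos (π*x)) (𝓝[≠] (1:ℝ)) (𝓝 0) := by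
      have := (hmulc.tendsto 1).mono_left (nhdsWithin_le_nhds (s := {(1:ℝ)}ᶜ))
      simpa [hw1] using this
    have := hslope1.mul hm
    rw [mul_zero] at this
    rw [hFeq]; exact this
  have hm1 : Tendsto (fun ε : ℝ => 1 - ε) (𝓝[>] (0:ℝ)) (𝓝[≠] (1:ℝ)) := by
    rw [tendsto_nhdsWithin_iff]
    constructor
    · have : Tendsto (fun ε : ℝ => 1 - ε) (𝓝 0) (𝓝 1) := by
        have h := ((continuous_const (y := (1:ℝ))).sub continuous_id).tendsto (0:ℝ)
        convert h using 2
        all_goals simp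
      exact this.mono_left nhdsWithin_le_nhds
    · filter_upwards [self_mem_nhdsWithin] with ε hε
      have : (0:ℝ) < ε := hε
      simp only [Set.mem_compl_iff, Set.mem_singleton_iff]
      intro h; linarith
  have hm0 : Tendsto (fun ε : ℝ => ε) (𝓝[>] (0:ℝ)) (𝓝[≠] (0:ℝ)) :=
    tendsto_id.mono_right (nhdsWithin_mono _ (fun x hx => ne_of_gt hx))
  have hev : ∀ᶠ ε in 𝓝[>] (0:ℝ), 0 ≤ G (1-ε) - G ε - (F (1-ε) - F ε) := by
    filter_upwards [Ioo_mem_nhdsGT_of_mem (by norm_num : (0:ℝ) ∈ Set.Ico (0:ℝ) (1/2))]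
      with ε hε
    have := key ε (1-ε) hε.1 (by cases hε with | intro h1 h2 => linarith)
      (by cases hε with | intro h1 h2 => linarith)
    linarith
  have hlim : Tendsto (fun ε => G (1-ε) - G ε - (F (1-ε) - F ε)) (𝓝[>] (0:ℝ))
      (𝓝 (G 1 - G 0 - (0 - 0))) := by
    have hG1 : Tendsto (fun ε : ℝ => G (1-ε)) (𝓝[>] (0:ℝ)) (𝓝 (G 1)) :=
      (hGc.tendsto 1).comp (hm1.mono_right nhdsWithin_le_nhds)
    have hG0 : Tendsto (fun ε : ℝ => G ε) (𝓝[>] (0:ℝ)) (𝓝 (G 0)) :=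
      (hGc.tendsto 0).mono_left nhdsWithin_le_nhds
    exact ((hG1.sub hG0).sub ((hF1.comp hm1).sub (hF0.comp hm0)))
  have h0 : (0:ℝ) ≤ G 1 - G 0 - (0 - 0) := ge_of_tendsto hlim hev
  have hG00 : G 0 = 0 := intervalIntegral.integral_same
  have hsplit : G 1 = (∫ x in (0:ℝ)..1, (deriv w x)^2) - π^2 * ∫ x in (0:ℝ)..1, (w x)^2 := by
    have h1 : IntervalIntegrable (fun x => (deriv w x)^2) volume 0 1 :=
      ((hw'.pow 2)).intervalIntegrable 0 1
    have h2 : IntervalIntegrable (fun x => π^2 * (w x)^2) volume 0 1 :=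
      (continuous_const.mul ((hwd.continuous).pow 2)).intervalIntegrable 0 1
    simp only [hGdef, hgdef]
    rw [intervalIntegral.integral_sub h1 h2, intervalIntegral.integral_const_mul]
  rw [hG00, hsplit] at h0
  linarith

lemma young1 (a b : ℝ) : a*b ≤ (1/4)*a^2 + b^2 := by nlinarith [sq_nonneg (a/2 - b)]

lemma young2 (m a b : ℝ) (hm : 0 < m) : a*b ≤ m*a^2/4 + b^2/m := by
  rw [div_add_div _ _ (by norm_num : (4:ℝ) ≠ 0) (ne_of_gt hm), le_div_iff₀ (by positivity)]
  nlinarith [sq_nonneg (m*a - 2*b)]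

lemma pi_sq_lb : (5:ℝ) < 4 * Real.pi ^ 2 - 5 := by
  have h := Real.pi_gt_three
  nlinarith

/-- The dissipation estimate (4.4) for the heat PDE (Case A): for `p̄ > 0`, a `C²`
function `w` with `w(0) = w(1) = 0`, continuous `θ₁, δ`, `y ∈ ℝ` and continuous `K`
with `|K(x)| ≤ |y|` on `[0,1]`,
`(1/p̄)∫₀¹ w(p̄w'' + θ₁K + δ) ≤ −∫₀¹ w² + (1/p̄²)(∫₀¹ θ₁²)y² + (1/(p̄²(4π² − 5)))∫₀¹ δ²`. -/
theorem heat_dissipation_estimate (pbar : ℝ) (hpbar : 0 < pbar)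
    (w θ₁ δ K : ℝ → ℝ) (y : ℝ)
    (hw : ContDiff ℝ 2 w) (hw0 : w 0 = 0) (hw1 : w 1 = 0)
    (hθ₁ : Continuous θ₁) (hδ : Continuous δ) (hK : Continuous K)
    (hKy : ∀ x ∈ Set.Icc (0 : ℝ) 1, |K x| ≤ |y|) :
    (1 / pbar) * ∫ x in (0 : ℝ)..1, w x * (pbar * deriv (deriv w) x + θ₁ x * K x + δ x) ≤
      -(∫ x in (0 : ℝ)..1, (w x) ^ 2) +
        (1 / pbar ^ 2) * (∫ x in (0 : ℝ)..1, (θ₁ x) ^ 2) * y ^ 2 +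
        (1 / (pbar ^ 2 * (4 * Real.pi ^ 2 - 5))) * ∫ x in (0 : ℝ)..1, (δ x) ^ 2 := by
  have hπ : (0:ℝ) < π := Real.pi_pos
  have hm : (0:ℝ) < 4 * π ^ 2 - 5 := by linarith [pi_sq_lb]
  have hwd : Differentiable ℝ w := hw.differentiable (by norm_num)
  have hwc : Continuous w := hwd.continuous
  have hdw1 : ContDiff ℝ 1 (deriv w) := (contDiff_succ_iff_deriv.mp (by exact_mod_cast hw)).2.2
  have hdwd : Differentiable ℝ (deriv w) := hdw1.differentiable (by norm_num)
  have hw'c : Continuous (deriv w) := hdwd.continuous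
  have hw''c : Continuous (deriv (deriv w)) := hdw1.continuous_deriv le_rfl
  -- integration by parts
  have hibp : (∫ x in (0:ℝ)..1, w x * deriv (deriv w) x)
      = -(∫ x in (0:ℝ)..1, (deriv w x)^2) := by
    have h := intervalIntegral.integral_mul_deriv_eq_deriv_mul_of_hasDerivAt
      (a := (0:ℝ)) (b := 1) (u := w) (v := deriv w) (u' := deriv w) (v' := deriv (deriv w))
      hwc.continuousOn hw'c.continuousOn
      (fun x _ => (hwd x).hasDerivAt) (fun x _ => (hdwd x).hasDerivAt)
      (hw'c.intervalIntegrable 0 1) (hw''c.intervalIntegrable 0 1)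
    rw [h, hw0, hw1]
    simp only [zero_mul, mul_zero, sub_zero, zero_sub]
    congr 1
    apply intervalIntegral.integral_congr
    intro x _
    ring
  -- split the integral
  have int1 : IntervalIntegrable (fun x => pbar * (w x * deriv (deriv w) x)) volume 0 1 :=
    (continuous_const.mul (hwc.mul hw''c)).intervalIntegrable 0 1
  have int2 : IntervalIntegrable (fun x => w x * θ₁ x * K x + w x * δ x) volume 0 1 :=
    (((hwc.mul hθ₁).mul hK).add (hwc.mul hδ)).intervalIntegrable 0 1
  have hsplit : (∫ x in (0:ℝ)..1, w x * (pbar * deriv (deriv w) x + θ₁ x * K x + δ x))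
      = pbar * (∫ x in (0:ℝ)..1, w x * deriv (deriv w) x)
        + ∫ x in (0:ℝ)..1, (w x * θ₁ x * K x + w x * δ x) := by
    rw [← intervalIntegral.integral_const_mul, ← intervalIntegral.integral_add int1 int2]
    apply intervalIntegral.integral_congr
    intro x _
    ring
  -- bound the middle integral
  set bnd : ℝ → ℝ := fun x => (π^2 - 1) * (w x)^2 + ((1/pbar^2) * y^2) * (θ₁ x)^2
    + (1/(pbar^2 * (4*π^2-5))) * (δ x)^2 with hbnddef
  have hb1 : IntervalIntegrable (fun x => (1/pbar) * (w x * θ₁ x * K x + w x * δ x)) volume 0 1 :=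
    (continuous_const.mul (((hwc.mul hθ₁).mul hK).add (hwc.mul hδ))).intervalIntegrable 0 1
  have hb2 : IntervalIntegrable bnd volume 0 1 := by
    apply Continuous.intervalIntegrable
    exact ((continuous_const.mul (hwc.pow 2)).add
      (continuous_const.mul (hθ₁.pow 2))).add (continuous_const.mul (hδ.pow 2))
  have hmid : (∫ x in (0:ℝ)..1, (1/pbar) * (w x * θ₁ x * K x + w x * δ x))
      ≤ ∫ x in (0:ℝ)..1, bnd x := by
    apply intervalIntegral.integral_mono_on (by norm_num) hb1 hb2
    intro x hx
    have hk : |K x| ≤ |y| := hKy x hx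
    have hk2 : (K x)^2 ≤ y^2 := by
      have := sq_abs (K x); have := sq_abs y
      nlinarith [abs_nonneg (K x), abs_nonneg y]
    have hy1 : w x * (θ₁ x * K x / pbar) ≤ (1/4)*(w x)^2 + (θ₁ x * K x / pbar)^2 :=
      young1 _ _
    have hy2 : w x * (δ x / pbar) ≤ (4*π^2-5)*(w x)^2/4 + (δ x / pbar)^2/(4*π^2-5) :=
      young2 _ _ _ hm
    have e1 : (θ₁ x * K x / pbar)^2 = (θ₁ x)^2 * (K x)^2 / pbar^2 := by ring
    have e2 : (θ₁ x)^2 * (K x)^2 / pbar^2 ≤ ((1/pbar^2) * y^2) * (θ₁ x)^2 := by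
      calc (θ₁ x)^2 * (K x)^2 / pbar^2 = (K x)^2 * ((1/pbar^2) * (θ₁ x)^2) := by ring
        _ ≤ y^2 * ((1/pbar^2) * (θ₁ x)^2) :=
            mul_le_mul_of_nonneg_right hk2 (by positivity)
        _ = ((1/pbar^2) * y^2) * (θ₁ x)^2 := by ring
    have e3 : (δ x / pbar)^2/(4*π^2-5) = (1/(pbar^2 * (4*π^2-5))) * (δ x)^2 := by
      field_simp
    have e4 : (1/pbar) * (w x * θ₁ x * K x + w x * δ x)
        = w x * (θ₁ x * K x / pbar) + w x * (δ x / pbar) := by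
      field_simp
    simp only [hbnddef]
    rw [e4]
    rw [e1] at hy1
    rw [e3] at hy2
    nlinarith [hy1, hy2, e2]
  -- assemble
  have hwir := wirtinger_aux w (hw.of_le (by norm_num)) hw0 hw1
  have hbndsplit : (∫ x in (0:ℝ)..1, bnd x)
      = (π^2 - 1) * (∫ x in (0:ℝ)..1, (w x)^2)
        + ((1/pbar^2) * y^2) * (∫ x in (0:ℝ)..1, (θ₁ x)^2)
        + (1/(pbar^2 * (4*π^2-5))) * (∫ x in (0:ℝ)..1, (δ x)^2) := by
    simp only [hbnddef]
    rw [intervalIntegral.integral_add, intervalIntegral.integral_add,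
      intervalIntegral.integral_const_mul, intervalIntegral.integral_const_mul,
      intervalIntegral.integral_const_mul]
    · exact (continuous_const.mul (hwc.pow 2)).intervalIntegrable 0 1
    · exact (continuous_const.mul (hθ₁.pow 2)).intervalIntegrable 0 1
    · exact ((continuous_const.mul (hwc.pow 2)).add
        (continuous_const.mul (hθ₁.pow 2))).intervalIntegrable 0 1
    · exact (continuous_const.mul (hδ.pow 2)).intervalIntegrable 0 1
  have hmid' : (1/pbar) * (∫ x in (0:ℝ)..1, (w x * θ₁ x * K x + w x * δ x))
      ≤ ∫ x in (0:ℝ)..1, bnd x := by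
    rw [← intervalIntegral.integral_const_mul]
    exact hmid
  rw [hsplit, mul_add, ← mul_assoc, one_div_mul_cancel (ne_of_gt hpbar), one_mul, hibp]
  rw [hbndsplit] at hmid'
  have harr : (1 / pbar^2) * (∫ x in (0:ℝ)..1, (θ₁ x)^2) * y^2
      = ((1/pbar^2) * y^2) * (∫ x in (0:ℝ)..1, (θ₁ x)^2) := by ring
  rw [harr]
  nlinarith [hwir, hmid', sq_nonneg π]
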